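/- If h = h1 + h2 and h' = h'1 + h'2 are sums (multiset unions) of anonymized histograms, then ℓ1(h, h') ≤ ℓ1(h1, h'1) + ℓ1(h2, h'2). -/

import Mathlib

/-- The `i`-th largest element (0-indexed) of a finite multiset of naturals,
taken to be `0` when `i` exceeds the number of elements. -/
def nthLargest (h : Multiset ℕ) (i : ℕ) : ℕ :=
  ((h.sort (· ≤ ·)).reverse).getD i 0

/-- The sorted ℓ1 distance `Σ_{i≥1} |n_(i)(h1) − n_(i)(h2)|` between two
anonymized histograms.  All terms with `i ≥ h1.card + h2.card` vanish, so the
finite sum below equals the infinite sum. -/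
def sortedL1 (h1 h2 : Multiset ℕ) : ℕ :=
  ∑ i ∈ Finset.range (h1.card + h2.card),
    ((nthLargest h1 i : ℤ) - (nthLargest h2 i : ℤ)).natAbs

/-- level count -/
def cnt (h : Multiset ℕ) (t : ℕ) : ℕ := Multiset.countP (fun a => t ≤ a) h

lemma cnt_add (h1 h2 : Multiset ℕ) (t : ℕ) : cnt (h1 + h2) t = cnt h1 t + cnt h2 t := by
  simp [cnt]

lemma cnt_le_card (h : Multiset ℕ) (t : ℕ) : cnt h t ≤ h.card :=
  Multiset.countP_le_card _ _

lemma ind_sum_le (c c' N : ℕ) (hcc : c ≤ c') (hc' : c' ≤ N) :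
    ∑ i ∈ Finset.range N,
      ((if i < c then (1:ℤ) else 0) - (if i < c' then (1:ℤ) else 0)).natAbs
      = ((c:ℤ) - c').natAbs := by
  rw [← Finset.sum_subset (s₁ := Finset.Ico c c')]
  · have : ∀ i ∈ Finset.Ico c c',
        ((if i < c then (1:ℤ) else 0) - (if i < c' then (1:ℤ) else 0)).natAbs = 1 := by
      intro i hi
      simp only [Finset.mem_Ico] at hi
      rw [if_neg (by omega), if_pos hi.2]
      simp
    rw [Finset.sum_congr rfl this]
    simp [Nat.card_Ico]
    omega
  · intro i hi
    simp only [Finset.mem_Ico, Finset.mem_range] at *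
    omega
  · intro i _ hi
    simp only [Finset.mem_Ico, not_and, not_lt] at hi
    by_cases h : i < c
    · rw [if_pos h, if_pos (by omega)]; simp
    · rw [if_neg h, if_neg (by intro hh; exact absurd (hi (by omega)) (by omega))]; simp

lemma ind_sum (c c' N : ℕ) (hc : c ≤ N) (hc' : c' ≤ N) :
    ∑ i ∈ Finset.range N,
      ((if i < c then (1:ℤ) else 0) - (if i < c' then (1:ℤ) else 0)).natAbs
      = ((c:ℤ) - c').natAbs := by
  rcases le_total c c' with h | h
  · exact ind_sum_le c c' N h hc'
  · have := ind_sum_le c' c N h hc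
    rw [← Int.natAbs_neg, neg_sub, ← this]
    apply Finset.sum_congr rfl
    intro i _
    rw [← Int.natAbs_neg, neg_sub]

lemma list_getD_iff : ∀ (l : List ℕ), l.Pairwise (· ≥ ·) → ∀ i t, 0 < t →
    (t ≤ l.getD i 0 ↔ i < l.countP (fun a => t ≤ a)) := by
  intro l
  induction l with
  | nil => intro _ i t ht; simp; omega
  | cons a l ih =>
    intro hs i t ht
    rw [List.pairwise_cons] at hs
    cases i with
    | zero =>
      simp only [List.getD_cons_zero, List.countP_cons, decide_eq_true_eq]
      constructor
      · intro h
        rw [if_pos h]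
        omega
      · intro h
        by_cases hta : t ≤ a
        · exact hta
        · exfalso
          rw [if_neg hta] at h
          have := (List.countP_pos_iff (p := fun x => decide (t ≤ x)) (l := l)).mp (by omega)
          obtain ⟨x, hx, hxt⟩ := this
          simp only [decide_eq_true_eq] at hxt
          exact hta (le_trans hxt (hs.1 x hx))
    | succ i =>
      simp only [List.getD_cons_succ, List.countP_cons, decide_eq_true_eq]
      rw [ih hs.2 i t ht]
      by_cases hta : t ≤ a
      · rw [if_pos hta]
        omega
      · rw [if_neg hta]
        have hz : l.countP (fun x => decide (t ≤ x)) = 0 := by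
          rw [List.countP_eq_zero]
          intro x hx
          simp only [decide_eq_true_eq]
          intro hc
          exact hta (le_trans hc (hs.1 x hx))
        omega

lemma nth_ge_iff (h : Multiset ℕ) (i t : ℕ) (ht : 0 < t) :
    (t ≤ nthLargest h i ↔ i < cnt h t) := by
  have hsorted : ((h.sort (· ≤ ·)).reverse).Pairwise (· ≥ ·) := by
    rw [List.pairwise_reverse]
    exact Multiset.pairwise_sort h (· ≤ ·)
  rw [nthLargest, list_getD_iff _ hsorted i t ht, List.countP_reverse, cnt]
  conv_rhs => rw [← Multiset.sort_eq h (· ≤ ·)]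
  rw [Multiset.coe_countP]

lemma nth_mem_or_zero (h : Multiset ℕ) (i : ℕ) :
    nthLargest h i ∈ h ∨ nthLargest h i = 0 := by
  rw [nthLargest]
  by_cases hi : i < ((h.sort (· ≤ ·)).reverse).length
  · left
    have hm : ((h.sort (· ≤ ·)).reverse).getD i 0 ∈ (h.sort (· ≤ ·)).reverse := by
      rw [List.getD_eq_getElem _ 0 hi]
      exact List.getElem_mem hi
    rw [List.mem_reverse, Multiset.mem_sort] at hm
    exact hm
  · right
    rw [List.getD_eq_default _ 0 (by omega)]

lemma key_eq (h h' : Multiset ℕ) (N T : ℕ) (hN : h.card ≤ N) (hN' : h'.card ≤ N)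
    (hT : ∀ a ∈ h, a ≤ T) (hT' : ∀ a ∈ h', a ≤ T) :
    ∑ i ∈ Finset.range N, ((nthLargest h i : ℤ) - (nthLargest h' i : ℤ)).natAbs
      = ∑ j ∈ Finset.range T, ((cnt h (j+1) : ℤ) - (cnt h' (j+1) : ℤ)).natAbs := by
  have hnth : ∀ i, nthLargest h i ≤ T := by
    intro i
    rcases nth_mem_or_zero h i with hm | hz
    · exact hT _ hm
    · omega
  have hnth' : ∀ i, nthLargest h' i ≤ T := by
    intro i
    rcases nth_mem_or_zero h' i with hm | hz
    · exact hT' _ hm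
    · omega
  calc ∑ i ∈ Finset.range N, ((nthLargest h i : ℤ) - (nthLargest h' i : ℤ)).natAbs
      = ∑ i ∈ Finset.range N, ∑ j ∈ Finset.range T,
          ((if j < nthLargest h i then (1:ℤ) else 0)
            - (if j < nthLargest h' i then (1:ℤ) else 0)).natAbs := by
        apply Finset.sum_congr rfl
        intro i _
        exact (ind_sum _ _ T (hnth i) (hnth' i)).symm
    _ = ∑ j ∈ Finset.range T, ∑ i ∈ Finset.range N,
          ((if i < cnt h (j+1) then (1:ℤ) else 0)
            - (if i < cnt h' (j+1) then (1:ℤ) else 0)).natAbs := by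
        rw [Finset.sum_comm]
        apply Finset.sum_congr rfl
        intro j _
        apply Finset.sum_congr rfl
        intro i _
        congr 2
        · congr 1
          rw [show (j < nthLargest h i) = (j + 1 ≤ nthLargest h i) from rfl]
          rw [nth_ge_iff h i (j+1) (by omega)]
        · congr 1
          rw [show (j < nthLargest h' i) = (j + 1 ≤ nthLargest h' i) from rfl]
          rw [nth_ge_iff h' i (j+1) (by omega)]
    _ = ∑ j ∈ Finset.range T, ((cnt h (j+1) : ℤ) - (cnt h' (j+1) : ℤ)).natAbs := by
        apply Finset.sum_congr rfl
        intro j _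
        exact ind_sum _ _ N (le_trans (cnt_le_card h _) hN)
          (le_trans (cnt_le_card h' _) hN')

/-- Dividing histograms only increases the distance: if `h = h1 + h2` and
`h' = h1' + h2'` (multiset sums), then
`ℓ1(h, h') ≤ ℓ1(h1, h1') + ℓ1(h2, h2')`. -/
theorem sortedL1_add_le (h1 h2 h1' h2' : Multiset ℕ)
    (hp1 : ∀ a ∈ h1, 0 < a) (hp2 : ∀ a ∈ h2, 0 < a)
    (hp1' : ∀ a ∈ h1', 0 < a) (hp2' : ∀ a ∈ h2', 0 < a) :
    sortedL1 (h1 + h2) (h1' + h2') ≤ sortedL1 h1 h1' + sortedL1 h2 h2' := by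
  set T := (h1 + h2 + h1' + h2').sum with hT
  have hb : ∀ a ∈ h1 + h2 + h1' + h2', a ≤ T :=
    fun a ha => Multiset.single_le_sum (fun x _ => Nat.zero_le x) a ha
  have e0 : sortedL1 (h1 + h2) (h1' + h2')
      = ∑ j ∈ Finset.range T, ((cnt (h1+h2) (j+1) : ℤ) - (cnt (h1'+h2') (j+1) : ℤ)).natAbs := by
    apply key_eq
    · simp
    · simp
    · intro a ha; apply hb; simp only [Multiset.mem_add] at *; tauto
    · intro a ha; apply hb; simp only [Multiset.mem_add] at *; tauto
  have e1 : sortedL1 h1 h1'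
      = ∑ j ∈ Finset.range T, ((cnt h1 (j+1) : ℤ) - (cnt h1' (j+1) : ℤ)).natAbs := by
    apply key_eq <;> try omega
    · intro a ha; apply hb; simp only [Multiset.mem_add] at *; tauto
    · intro a ha; apply hb; simp only [Multiset.mem_add] at *; tauto
  have e2 : sortedL1 h2 h2'
      = ∑ j ∈ Finset.range T, ((cnt h2 (j+1) : ℤ) - (cnt h2' (j+1) : ℤ)).natAbs := by
    apply key_eq <;> try omega
    · intro a ha; apply hb; simp only [Multiset.mem_add] at *; tauto
    · intro a ha; apply hb; simp only [Multiset.mem_add] at *; tauto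
  rw [e0, e1, e2, ← Finset.sum_add_distrib]
  apply Finset.sum_le_sum
  intro j _
  rw [cnt_add, cnt_add]
  push_cast
  omega
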